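/- Let ν be a probability measure on ℝ, let N be a positive integer, and let ε ∈ (0,1). Then the N-fold product measure ν^{⊗N} of the set {ω ∈ ℝ^N : ν({x ∈ ℝ : x < minᵢ ωᵢ}) > ε} is at most (1 − ε)^N. -/

import Mathlib

open MeasureTheory
open scoped ENNReal

/-- One-dimensional scenario-optimization bound: the product-measure probability that the
violation probability `ν((-∞, minᵢ ωᵢ))` of the optimal scenario solution exceeds `ε`
is at most `(1 - ε) ^ N`.  (Note `x < minᵢ ωᵢ ↔ ∀ i, x < ωᵢ`.) -/
theorem stmt_1 (ν : Measure ℝ) [IsProbabilityMeasure ν] (N : ℕ) (hN : 0 < N)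
    (ε : ℝ) (hε : ε ∈ Set.Ioo (0 : ℝ) 1) :
    (Measure.pi fun _ : Fin N => ν)
      {ω : Fin N → ℝ | ENNReal.ofReal ε < ν {x : ℝ | ∀ i, x < ω i}}
      ≤ ENNReal.ofReal ((1 - ε) ^ N) := by
  obtain ⟨hε0, hε1⟩ := hε
  set e := ENNReal.ofReal ε with he
  have he1 : e < 1 := by
    rw [he, ← ENNReal.ofReal_one]
    exact (ENNReal.ofReal_lt_ofReal_iff one_pos).2 hε1
  have h1me : (1 : ℝ≥0∞) - e = ENNReal.ofReal (1 - ε) := by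
    rw [ENNReal.ofReal_sub 1 hε0.le, ENNReal.ofReal_one]
  set A : Set ℝ := {r | e < ν (Set.Iio r)} with hA
  have hup : ∀ a ∈ A, ∀ b, a ≤ b → b ∈ A := fun a ha b hab =>
    lt_of_lt_of_le ha (measure_mono (Set.Iio_subset_Iio hab))
  -- A is nonempty
  have hAne : A.Nonempty := by
    have h1 : Filter.Tendsto (fun x => ν (Set.Iic x)) Filter.atTop (nhds (ν Set.univ)) :=
      MeasureTheory.tendsto_measure_Iic_atTop ν
    rw [measure_univ] at h1
    have h2 : ∀ᶠ x in Filter.atTop, e < ν (Set.Iic x) :=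
      h1.eventually (eventually_gt_nhds he1)
    obtain ⟨r, hr⟩ := h2.exists
    exact ⟨r + 1, lt_of_lt_of_le hr (measure_mono fun x hx =>
      lt_of_le_of_lt hx (lt_add_one r))⟩
  -- A is bounded below
  have hbdd : BddBelow A := by
    have hanti : Antitone (fun n : ℕ => Set.Iio (-(n : ℝ))) := fun m n hmn =>
      Set.Iio_subset_Iio (by exact_mod_cast neg_le_neg (Nat.cast_le.2 hmn))
    have hI : ν (⋂ n : ℕ, Set.Iio (-(n : ℝ))) = ⨅ n : ℕ, ν (Set.Iio (-(n : ℝ))) :=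
      hanti.measure_iInter (fun n => measurableSet_Iio.nullMeasurableSet)
        ⟨0, measure_ne_top ν _⟩
    have hempty : (⋂ n : ℕ, Set.Iio (-(n : ℝ))) = ∅ := by
      ext x
      simp only [Set.mem_iInter, Set.mem_Iio, Set.mem_empty_iff_false, iff_false, not_forall,
        not_lt]
      obtain ⟨n, hn⟩ := exists_nat_gt (-x)
      exact ⟨n, by linarith⟩
    rw [hempty, measure_empty] at hI
    have h0e : (⨅ n : ℕ, ν (Set.Iio (-(n : ℝ)))) < e := by
      rw [← hI, he]; exact ENNReal.ofReal_pos.2 hε0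
    obtain ⟨n, hn⟩ := iInf_lt_iff.1 h0e
    refine ⟨-(n : ℝ), fun a ha => ?_⟩
    by_contra hcon
    push_neg at hcon
    exact absurd (hup a ha _ hcon.le) (not_lt.2 hn.le)
  set s : ℝ := sInf A with hs
  -- every coordinate of a "bad" ω lies in A
  have hbadA : ∀ ω : Fin N → ℝ, e < ν {x : ℝ | ∀ i, x < ω i} → ∀ i, ω i ∈ A := by
    intro ω hω i
    exact lt_of_lt_of_le hω (measure_mono fun x hx => hx i)
  -- general final step
  have hfinal : ∀ S : Set ℝ, ν S ≤ ENNReal.ofReal (1 - ε) →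
      {ω : Fin N → ℝ | e < ν {x : ℝ | ∀ i, x < ω i}} ⊆ Set.univ.pi (fun _ : Fin N => S) →
      (Measure.pi fun _ : Fin N => ν) {ω : Fin N → ℝ | e < ν {x : ℝ | ∀ i, x < ω i}}
        ≤ ENNReal.ofReal ((1 - ε) ^ N) := by
    intro S hS hsub
    calc (Measure.pi fun _ : Fin N => ν) {ω : Fin N → ℝ | e < ν {x : ℝ | ∀ i, x < ω i}}
        ≤ (Measure.pi fun _ : Fin N => ν) (Set.univ.pi (fun _ : Fin N => S)) :=
          measure_mono hsub
      _ = ∏ _i : Fin N, ν S := Measure.pi_pi _ _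
      _ = ν S ^ N := by rw [Finset.prod_const, Finset.card_univ, Fintype.card_fin]
      _ ≤ (ENNReal.ofReal (1 - ε)) ^ N := pow_le_pow_left' hS N
      _ = ENNReal.ofReal ((1 - ε) ^ N) := (ENNReal.ofReal_pow (by linarith) N).symm
  by_cases hsA : s ∈ A
  · -- the infimum itself belongs to A : use `Ici s`
    refine hfinal (Set.Ici s) ?_ ?_
    · rw [← Set.compl_Iio, measure_compl measurableSet_Iio (measure_ne_top ν _), measure_univ,
        ← h1me]
      exact tsub_le_tsub_left hsA.le 1
    · intro ω hω i _
      exact csInf_le hbdd (hbadA ω hω i)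
  · -- the infimum does not belong to A : use `Ioi s`
    refine hfinal (Set.Ioi s) ?_ ?_
    · have hIic : e ≤ ν (Set.Iic s) := by
        have hIiceq : Set.Iic s = ⋂ n : ℕ, Set.Iio (s + 1 / (n + 1)) := by
          ext x
          simp only [Set.mem_Iic, Set.mem_iInter, Set.mem_Iio]
          constructor
          · intro hx n
            have : (0 : ℝ) < 1 / (n + 1) := by positivity
            linarith
          · intro hx
            by_contra hcon
            push_neg at hcon
            obtain ⟨n, hn⟩ := exists_nat_one_div_lt (show (0 : ℝ) < x - s by linarith)
            have := hx n
            rw [div_lt_iff₀ (by positivity)] at hn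
            have h2 : 1 / ((n : ℝ) + 1) < x - s := by
              rw [div_lt_iff₀ (by positivity)]
              linarith [hn]
            linarith
        have hanti : Antitone (fun n : ℕ => Set.Iio (s + 1 / ((n : ℝ) + 1))) := by
          intro m n hmn
          apply Set.Iio_subset_Iio
          have : (1 : ℝ) / (n + 1) ≤ 1 / (m + 1) := by
            apply one_div_le_one_div_of_le (by positivity)
            exact_mod_cast add_le_add_left (Nat.cast_le.2 hmn) 1
          linarith
        rw [hIiceq, hanti.measure_iInter (fun n => measurableSet_Iio.nullMeasurableSet)
          ⟨0, measure_ne_top ν _⟩]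
        refine le_iInf fun n => ?_
        have hlt : s < s + 1 / ((n : ℝ) + 1) := by
          have : (0 : ℝ) < 1 / (n + 1) := by positivity
          linarith
        obtain ⟨a, haA, ha⟩ := (csInf_lt_iff hbdd hAne).1 hlt
        exact le_trans haA.le (measure_mono (Set.Iio_subset_Iio ha.le))
      rw [← Set.compl_Iic, measure_compl measurableSet_Iic (measure_ne_top ν _), measure_univ,
        ← h1me]
      exact tsub_le_tsub_left hIic 1
    · intro ω hω i _
      have hmem := hbadA ω hω i
      have hle : s ≤ ω i := csInf_le hbdd hmem
      rcases hle.lt_or_eq with h | h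
      · exact h
      · exact absurd (h ▸ hmem) hsA
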